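/- arXiv:2304.14793 — 3 statements merged into one kernel-verified Lean document; each statement's English description precedes it below -/
import Mathlib

section
/- If d ∈ ℕ is strictly less than the stable coloring number of a graph G, then there exist two d-reducts of G that are not isomorphic. Combined with the converse direction, there is a single d-reduct of G up to isomorphism if and only if d is at least the stable coloring number of G. -/
open Classical

/-- The multiset of incoming neighbors of `v` in the multigraph with edge
multiplicity function `E` (with `E w v` the multiplicity of edge `w → v`). -/
def inc {V : Type*} [Fintype V] (E : V → V → ℕ) (v : V) : Multiset V :=
  Finset.univ.val.bind fun w => Multiset.replicate (E w v) w

/-- Cap all multiplicities of a multiset at `c ∈ ℕ∞`. -/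
noncomputable def capM {α : Type*} (c : ℕ∞) (M : Multiset α) : Multiset α :=
  letI := Classical.decEq α
  M.toFinset.val.bind fun x => Multiset.replicate ((min (M.count x : ℕ∞) c).toNat) x

/-- The type of colors obtained after `d` steps of color refinement, starting
from base colors in `Y`: a depth-`d` color is the previous color paired with the
multiset of previous colors of the incoming neighbors. -/
def CRt (Y : Type*) : ℕ → Type _
  | 0 => Y
  | (d+1) => CRt Y d × Multiset (CRt Y d)

/-- `d` steps of color refinement, starting from base coloring `g`. -/
def colr {V : Type*} [Fintype V] {Y : Type*} (E : V → V → ℕ) (g : V → Y) :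
    (d : ℕ) → V → CRt Y d
  | 0 => g
  | (d+1) => fun v => (colr E g d v, (inc E v).map (colr E g d))

/-- `d` steps of `c`-graded color refinement. -/
noncomputable def colrC {V : Type*} [Fintype V] {Y : Type*} (c : ℕ∞) (E : V → V → ℕ)
    (g : V → Y) : (d : ℕ) → V → CRt Y d
  | 0 => g
  | (d+1) => fun v => (colrC c E g d v, capM c ((inc E v).map (colrC c E g d)))

/-- The partition induced by `d` refinement steps is stable at `d`. -/
def stableAt {V : Type*} [Fintype V] {Y : Type*} (E : V → V → ℕ) (g : V → Y) (d : ℕ) : Prop :=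
  ∀ v w : V, colr E g d v = colr E g d w ↔ colr E g (d+1) v = colr E g (d+1) w

/-- The stable coloring number: least depth at which color refinement stabilizes. -/
noncomputable def stableNum {V : Type*} [Fintype V] {Y : Type*} (E : V → V → ℕ) (g : V → Y) : ℕ :=
  sInf { d | stableAt E g d }

/-- The stable coloring `colr^∞`. -/
noncomputable def colrInf {V : Type*} [Fintype V] {Y : Type*} (E : V → V → ℕ) (g : V → Y) :
    V → CRt Y (stableNum E g) :=
  colr E g (stableNum E g)

/-- The depth (number of refinement rounds) corresponding to `d ∈ ℕ∞`:
for `d = ∞` it is the stable coloring number of the graph. -/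
noncomputable def edepth {V : Type*} [Fintype V] {Y : Type*} (E : V → V → ℕ) (g : V → Y)
    (d : ℕ∞) : ℕ :=
  WithTop.untopD (stableNum E g) d

/-- Color refinement with depth `d ∈ ℕ∞` (stable coloring for `d = ∞`). -/
noncomputable def colrE' {V : Type*} [Fintype V] {Y : Type*} (E : V → V → ℕ) (g : V → Y)
    (d : ℕ∞) : V → CRt Y (edepth E g d) :=
  colr E g (edepth E g d)

/-- A substitution choosing one representative per class of the coloring `col`:
`ρ v` is in the class of `v`, and `ρ` is constant on classes. -/
def IsSubstWith {V : Type*} {C : Type*} (col : V → C) (ρ : V → V) : Prop :=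
  (∀ v, col (ρ v) = col v) ∧ ∀ v w, col v = col w → ρ v = ρ w

/-- Node set of the reduction: the chosen representatives. -/
def RNodes {V : Type*} (ρ : V → V) : Type _ := { v : V // ∃ u, ρ u = v }

noncomputable instance {V : Type*} [Fintype V] (ρ : V → V) : Fintype (RNodes ρ) := by
  unfold RNodes; exact Subtype.fintype _

instance {V : Type*} [DecidableEq V] (ρ : V → V) : DecidableEq (RNodes ρ) := by
  unfold RNodes; infer_instance

/-- Edge multiplicities of the reduction: `E'(v → w) = Σ_{v' ∈ [v]} E(v' → w)`. -/
noncomputable def reductE {V : Type*} [Fintype V] {C : Type*} (E : V → V → ℕ) (col : V → C)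
    (ρ : V → V) (a b : RNodes ρ) : ℕ :=
  ∑ v' ∈ Finset.univ.filter (fun v' => col v' = col a.val), E v' b.val

/-- Edge multiplicities of the `c`-graded reduction:
`E'(v → w) = min(Σ_{v' ∈ [v]} min(E(v' → w), c), c)`. -/
noncomputable def reductEC {V : Type*} [Fintype V] {C : Type*} (c : ℕ∞) (E : V → V → ℕ)
    (col : V → C) (ρ : V → V) (a b : RNodes ρ) : ℕ :=
  (min (↑(∑ v' ∈ Finset.univ.filter (fun v' => col v' = col a.val),
      (min (E v' b.val : ℕ∞) c).toNat) : ℕ∞) c).toNat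

/-- Coloring of the reduction: colors are inherited. -/
def reductG {V : Type*} {Y : Type*} (g : V → Y) (ρ : V → V) (a : RNodes ρ) : Y := g a.val

/-- A GNN layer of input dimension `p` and output dimension `q`. -/
structure GNNLayer (p q : ℕ) where
  h : ℕ
  agg : Multiset (Fin p → ℝ) → (Fin h → ℝ)
  comb : (Fin p → ℝ) → (Fin h → ℝ) → (Fin q → ℝ)

/-- The feature map transformer computed by a GNN layer. -/
def GNNLayer.apply {p q : ℕ} (L : GNNLayer p q) {V : Type*} [Fintype V]
    (E : V → V → ℕ) (g : V → Fin p → ℝ) : V → Fin q → ℝ :=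
  fun v => L.comb (g v) (L.agg ((inc E v).map g))

/-- A GNN: a nonempty sequence of layers with matching dimensions. -/
inductive GNN : ℕ → ℕ → Type
  | single : ∀ {p q}, GNNLayer p q → GNN p q
  | cons : ∀ {p r q}, GNNLayer p r → GNN r q → GNN p q

/-- Number of layers of a GNN. -/
def GNN.depth : ∀ {p q}, GNN p q → ℕ
  | _, _, .single _ => 1
  | _, _, .cons _ rest => rest.depth + 1

/-- The feature map transformer computed by a GNN. -/
def GNN.apply {V : Type*} [Fintype V] : ∀ {p q}, GNN p q → (V → V → ℕ) →
    (V → Fin p → ℝ) → V → Fin q → ℝ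
  | _, _, .single L, E, g => L.apply E g
  | _, _, .cons L rest, E, g => rest.apply E (L.apply E g)

/-- A GNN layer has width `c` if its aggregation only depends on multiplicities up to `c`. -/
def GNNLayer.HasWidth {p q : ℕ} (c : ℕ∞) (L : GNNLayer p q) : Prop :=
  ∀ M, L.agg M = L.agg (capM c M)

/-- A GNN has width `c` if all its layers do. -/
def GNN.HasWidth (c : ℕ∞) : ∀ {p q}, GNN p q → Prop
  | _, _, .single L => L.HasWidth c
  | _, _, .cons L rest => L.HasWidth c ∧ rest.HasWidth c


section AuxCR

variable {V : Type*} [Fintype V] {Y C : Type*}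

lemma multiset_bind_eq_sum {α β : Type*} (s : Multiset α) (f : α → Multiset β) :
    s.bind f = (s.map f).sum := by
  induction s using Multiset.induction with
  | empty => simp
  | cons a s ih => simp [ih]

lemma replicate_finset_sum {α β : Type*} (s : Finset β) (n : β → ℕ) (a : α) :
    Multiset.replicate (∑ x ∈ s, n x) a = ∑ x ∈ s, Multiset.replicate (n x) a := by
  classical
  induction s using Finset.induction with
  | empty => simp
  | insert _ _ h ih => rw [Finset.sum_insert h, Finset.sum_insert h, Multiset.replicate_add, ih]

lemma colr_succ_def (E : V → V → ℕ) (g : V → Y) (d : ℕ) (v : V) :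
    colr E g (d+1) v = (colr E g d v, (inc E v).map (colr E g d)) := rfl

lemma colr_zero_def (E : V → V → ℕ) (g : V → Y) (v : V) : colr E g 0 v = g v := rfl

lemma colr_proj {E : V → V → ℕ} {g : V → Y} {d : ℕ} {v w : V}
    (h : colr E g (d+1) v = colr E g (d+1) w) : colr E g d v = colr E g d w :=
  congrArg Prod.fst h

lemma colr_snd {E : V → V → ℕ} {g : V → Y} {d : ℕ} {v w : V}
    (h : colr E g (d+1) v = colr E g (d+1) w) :
    (inc E v).map (colr E g d) = (inc E w).map (colr E g d) :=
  congrArg Prod.snd h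

lemma colr_mono (E : V → V → ℕ) (g : V → Y) :
    ∀ {d k : ℕ}, k ≤ d → ∀ {v w : V},
      colr E g d v = colr E g d w → colr E g k v = colr E g k w := by
  intro d
  induction d with
  | zero =>
    intro k hk v w h
    have : k = 0 := Nat.le_zero.mp hk
    subst this; exact h
  | succ d ih =>
    intro k hk v w h
    rcases Nat.eq_or_lt_of_le hk with h' | h'
    · subst h'; exact h
    · exact ih (Nat.lt_succ_iff.mp h') (colr_proj h)

/-- Representative picker via Hilbert epsilon. -/
noncomputable def repPick [Nonempty V] (col : V → C) (u : V) : V :=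
  Classical.epsilon (fun x => col x = col u)

lemma repPick_col [Nonempty V] (col : V → C) (u : V) : col (repPick col u) = col u :=
  Classical.epsilon_spec (p := fun x => col x = col u) ⟨u, rfl⟩

lemma repPick_congr [Nonempty V] (col : V → C) {u u' : V} (h : col u = col u') :
    repPick col u = repPick col u' := by
  unfold repPick; rw [h]

lemma sum_fibers {M : Type*} [AddCommMonoid M] (col : V → C) (ρ : V → V)
    (h : IsSubstWith col ρ) (f : V → M) :
    (∑ b : RNodes ρ, ∑ v' ∈ Finset.univ.filter (fun v' => col v' = col b.val), f v')
      = ∑ v', f v' := by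
  classical
  have key : ∀ b : RNodes ρ,
      (Finset.univ.filter (fun v' => col v' = col b.val))
        = Finset.univ.filter
            (fun v' => (⟨ρ v', ⟨v', rfl⟩⟩ : RNodes ρ) = b) := by
    intro b
    apply Finset.filter_congr
    intro x _
    constructor
    · intro hx
      obtain ⟨u, hu⟩ := b.2
      have h1 : ρ x = ρ b.val := h.2 _ _ hx
      have h2 : ρ b.val = b.val := by
        rw [← hu]; exact h.2 _ _ (h.1 u)
      exact Subtype.ext (h1.trans h2)
    · intro hx
      have : ρ x = b.val := congrArg Subtype.val hx
      rw [← this]; exact (h.1 x).symm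
  calc (∑ b : RNodes ρ, ∑ v' ∈ Finset.univ.filter (fun v' => col v' = col b.val), f v')
      = ∑ b : RNodes ρ, ∑ v' ∈ Finset.univ.filter
          (fun v' => (⟨ρ v', ⟨v', rfl⟩⟩ : RNodes ρ) = b), f v' := by
        exact Finset.sum_congr rfl fun b _ => by rw [key b]
    _ = ∑ v', f v' := by
        refine (Finset.sum_congr rfl fun b _ => ?_).trans (Finset.sum_fiberwise_of_maps_to
          (g := fun v' => (⟨ρ v', ⟨v', rfl⟩⟩ : RNodes ρ)) (fun i _ => Finset.mem_univ _) f)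
        exact Finset.sum_congr (Finset.ext fun x =>
          by simp only [Finset.mem_filter] <;> rfl) fun _ _ => rfl

lemma map_inc_reduct {α : Type*} (E : V → V → ℕ) (col : V → C) (ρ : V → V)
    (h : IsSubstWith col ρ) (F : V → α) (hF : ∀ v w, col v = col w → F v = F w)
    (a : RNodes ρ) :
    (inc (reductE E col ρ) a).map (fun b => F b.val) = (inc E a.val).map F := by
  classical
  unfold inc
  rw [Multiset.map_bind, Multiset.map_bind]
  simp only [Multiset.map_replicate]
  rw [multiset_bind_eq_sum, multiset_bind_eq_sum]
  show (∑ b : RNodes ρ, Multiset.replicate (reductE E col ρ b a) (F b.val))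
      = ∑ w : V, Multiset.replicate (E w a.val) (F w)
  have step : ∀ b : RNodes ρ,
      Multiset.replicate (reductE E col ρ b a) (F b.val)
        = ∑ v' ∈ Finset.univ.filter (fun v' => col v' = col b.val),
            Multiset.replicate (E v' a.val) (F v') := by
    intro b
    unfold reductE
    rw [replicate_finset_sum]
    exact Finset.sum_congr rfl fun v' hv' => by
      rw [hF v' b.val (Finset.mem_filter.mp hv').2]
  rw [Finset.sum_congr rfl fun b _ => step b]
  exact sum_fibers col ρ h _

lemma colr_reduct (E : V → V → ℕ) (g : V → Y) (d : ℕ) (ρ : V → V)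
    (h : IsSubstWith (colr E g d) ρ) :
    ∀ k, k ≤ d + 1 → ∀ a : RNodes ρ,
      colr (reductE E (colr E g d) ρ) (reductG g ρ) k a = colr E g k a.val := by
  intro k
  induction k with
  | zero => intro _ a; rfl
  | succ k ih =>
    intro hk a
    have hk' : k ≤ d := Nat.lt_succ_iff.mp (Nat.lt_of_succ_le hk)
    have hkd : k ≤ d + 1 := Nat.le_succ_of_le hk'
    change @Eq (CRt Y k × Multiset (CRt Y k)) _ _
    rw [colr_succ_def (reductE E (colr E g d) ρ) (reductG g ρ) k a,
        colr_succ_def E g k a.val, Prod.mk.injEq]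
    refine ⟨ih hkd a, ?_⟩
    have h1 : (inc (reductE E (colr E g d) ρ) a).map
        (colr (reductE E (colr E g d) ρ) (reductG g ρ) k)
        = (inc (reductE E (colr E g d) ρ) a).map (fun b => colr E g k b.val) :=
      Multiset.map_congr rfl fun b _ => ih hkd b
    rw [h1]
    exact map_inc_reduct E (colr E g d) ρ h (colr E g k)
      (fun v w hvw => colr_mono E g hk' hvw) a

lemma inc_equiv {V₁ V₂ : Type*} [Fintype V₁] [Fintype V₂]
    (E₁ : V₁ → V₁ → ℕ) (E₂ : V₂ → V₂ → ℕ) (f : V₁ ≃ V₂)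
    (hE : ∀ v w, E₂ (f v) (f w) = E₁ v w) (v : V₁) :
    inc E₂ (f v) = (inc E₁ v).map f := by
  unfold inc
  have huniv : (Finset.univ : Finset V₂).val = (Finset.univ : Finset V₁).val.map f := by
    rw [← Finset.map_univ_equiv f]; rfl
  rw [huniv, Multiset.bind_map, Multiset.map_bind]
  refine Multiset.bind_congr fun w _ => ?_
  rw [hE w v, Multiset.map_replicate]

lemma colr_equiv {V₁ V₂ : Type*} [Fintype V₁] [Fintype V₂] {Y : Type*}
    (E₁ : V₁ → V₁ → ℕ) (E₂ : V₂ → V₂ → ℕ) (g₁ : V₁ → Y) (g₂ : V₂ → Y)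
    (f : V₁ ≃ V₂) (hg : ∀ v, g₂ (f v) = g₁ v)
    (hE : ∀ v w, E₂ (f v) (f w) = E₁ v w) :
    ∀ k v, colr E₂ g₂ k (f v) = colr E₁ g₁ k v := by
  intro k
  induction k with
  | zero => intro v; exact hg v
  | succ k ih =>
    intro v
    change @Eq (CRt Y k × Multiset (CRt Y k)) _ _
    rw [colr_succ_def E₂ g₂ k (f v), colr_succ_def E₁ g₁ k v, Prod.mk.injEq]
    refine ⟨ih v, ?_⟩
    rw [inc_equiv E₁ E₂ f hE v, Multiset.map_map]
    exact Multiset.map_congr rfl fun x _ => ih x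

lemma stableAt_succ {E : V → V → ℕ} {g : V → Y} {d : ℕ} (h : stableAt E g d) :
    stableAt E g (d+1) := by
  intro v w
  constructor
  · intro h1
    classical
    set F : CRt Y d → CRt Y (d+1) := fun c =>
      if hx : ∃ x, colr E g d x = c then colr E g (d+1) hx.choose
      else colr E g (d+1) v with hFdef
    have hFx : ∀ x : V, F (colr E g d x) = colr E g (d+1) x := by
      intro x
      have hx : ∃ y, colr E g d y = colr E g d x := ⟨x, rfl⟩
      rw [hFdef]
      simp only [dif_pos hx]
      exact (h _ x).mp hx.choose_spec
    change @Eq (CRt Y (d+1) × Multiset (CRt Y (d+1))) _ _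
    rw [colr_succ_def E g (d+1) v, colr_succ_def E g (d+1) w, Prod.mk.injEq]
    refine ⟨h1, ?_⟩
    have h2 : (inc E v).map (colr E g d) = (inc E w).map (colr E g d) := colr_snd h1
    calc (inc E v).map (colr E g (d+1))
        = ((inc E v).map (colr E g d)).map F := by
          rw [Multiset.map_map]
          exact Multiset.map_congr rfl fun x _ => (hFx x).symm
      _ = ((inc E w).map (colr E g d)).map F := by rw [h2]
      _ = (inc E w).map (colr E g (d+1)) := by
          rw [Multiset.map_map]
          exact Multiset.map_congr rfl fun x _ => hFx x
  · exact colr_proj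

lemma exists_stableAt (E : V → V → ℕ) (g : V → Y) : ∃ d, stableAt E g d := by
  by_contra hc
  push_neg at hc
  set n : ℕ → ℕ := fun d => (Set.range (colr E g d)).ncard with hn
  have himg : ∀ d, Set.range (colr E g d)
      = Prod.fst '' Set.range (colr E g (d+1)) := by
    intro d
    ext x
    constructor
    · rintro ⟨v, rfl⟩
      exact ⟨colr E g (d+1) v, ⟨v, rfl⟩, rfl⟩
    · rintro ⟨_, ⟨v, rfl⟩, rfl⟩
      exact ⟨v, rfl⟩
  have hmono : ∀ d, n d < n (d+1) := by
    intro d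
    have hle : n d ≤ n (d+1) := by
      rw [hn]; dsimp only; rw [himg d]
      exact Set.ncard_image_le (Set.finite_range _)
    rcases Nat.lt_or_ge (n d) (n (d+1)) with h' | h'
    · exact h'
    · exfalso
      have heq : (Prod.fst '' Set.range (colr E g (d+1))).ncard
          = (Set.range (colr E g (d+1))).ncard := by
        rw [← himg d]
        exact le_antisymm hle h'
      have hinj := Set.injOn_of_ncard_image_eq heq (Set.finite_range _)
      apply hc d
      intro x y
      constructor
      · intro hxy
        exact hinj (Set.mem_range_self x) (Set.mem_range_self y) hxy
      · exact colr_proj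
  have hge : ∀ d, d ≤ n d := by
    intro d
    induction d with
    | zero => exact Nat.zero_le _
    | succ d ih => exact Nat.succ_le_of_lt (Nat.lt_of_le_of_lt ih (hmono d))
  have hub : ∀ d, n d ≤ Fintype.card V := by
    intro d
    rw [hn]; dsimp only
    calc (Set.range (colr E g d)).ncard
        = (colr E g d '' Set.univ).ncard := by rw [Set.image_univ]
      _ ≤ (Set.univ : Set V).ncard := Set.ncard_image_le (Set.toFinite _)
      _ = Nat.card V := Set.ncard_univ V
      _ = Fintype.card V := Nat.card_eq_fintype_card
  have := hge (Fintype.card V + 1)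
  have := hub (Fintype.card V + 1)
  omega

lemma stableAt_add {E : V → V → ℕ} {g : V → Y} {d : ℕ} (h : stableAt E g d) :
    ∀ k, stableAt E g (d + k) := by
  intro k
  induction k with
  | zero => exact h
  | succ k ih => exact stableAt_succ ih

lemma stableAt_of_le {E : V → V → ℕ} {g : V → Y} {d e : ℕ}
    (h : stableAt E g d) (hde : d ≤ e) : stableAt E g e := by
  obtain ⟨k, rfl⟩ := Nat.exists_eq_add_of_le hde
  exact stableAt_add h k

lemma stableAt_stableNum (E : V → V → ℕ) (g : V → Y) :
    stableAt E g (stableNum E g) :=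
  Nat.sInf_mem (exists_stableAt E g)

lemma sum_filter_class (E : V → V → ℕ) (col : V → C) (c : C) (b : V) :
    (∑ v' ∈ Finset.univ.filter (fun v' => col v' = c), E v' b)
      = Multiset.count c ((inc E b).map col) := by
  classical
  unfold inc
  rw [Multiset.map_bind]
  simp only [Multiset.map_replicate]
  rw [Multiset.count_bind]
  rw [Finset.sum_filter]
  show (∑ w : V, if col w = c then E w b else 0)
      = (Finset.univ.val.map fun w => Multiset.count c (Multiset.replicate (E w b) (col w))).sum
  rw [show ((Finset.univ.val.map fun w =>
      Multiset.count c (Multiset.replicate (E w b) (col w))).sum)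
      = ∑ w : V, Multiset.count c (Multiset.replicate (E w b) (col w)) from rfl]
  refine Finset.sum_congr rfl fun w _ => ?_
  rw [Multiset.count_replicate]

end AuxCR

section AuxCR2

variable {V : Type*} [Fintype V] {Y C : Type*}

lemma isSubst_if [Nonempty V] (col : V → C) (v x : V) (hx : col x = col v) :
    IsSubstWith col (fun u => if col u = col v then x else repPick col u) := by
  constructor
  · intro u
    by_cases hu : col u = col v
    · show col (if col u = col v then x else repPick col u) = col u
      rw [if_pos hu]; rw [hx, hu]
    · show col (if col u = col v then x else repPick col u) = col u
      rw [if_neg hu]; exact repPick_col col u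
  · intro u u' h
    by_cases hu : col u = col v
    · show (if col u = col v then x else repPick col u)
          = (if col u' = col v then x else repPick col u')
      rw [if_pos hu, if_pos (h.symm.trans hu)]
    · show (if col u = col v then x else repPick col u)
          = (if col u' = col v then x else repPick col u')
      rw [if_neg hu, if_neg (fun hc => hu (h.trans hc)), repPick_congr col h]

end AuxCR2

/-- below the stable coloring number there are non-isomorphic
`d`-reducts; all `d`-reducts are isomorphic iff `d` is at least the stable
coloring number. -/
theorem reducts_unique_iff_stable {V Y : Type*} [Fintype V] [DecidableEq V]
    (E : V → V → ℕ) (g : V → Y) (d : ℕ) :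
    ((d < stableNum E g) → ∃ ρ₁ ρ₂ : V → V,
      IsSubstWith (colr E g d) ρ₁ ∧ IsSubstWith (colr E g d) ρ₂ ∧
      ¬ ∃ f : RNodes ρ₁ ≃ RNodes ρ₂,
          (∀ a, g (f a).val = g a.val) ∧
          ∀ a b, reductE E (colr E g d) ρ₂ (f a) (f b) = reductE E (colr E g d) ρ₁ a b) ∧
    ((∀ ρ₁ ρ₂ : V → V, IsSubstWith (colr E g d) ρ₁ → IsSubstWith (colr E g d) ρ₂ →
      ∃ f : RNodes ρ₁ ≃ RNodes ρ₂,
          (∀ a, g (f a).val = g a.val) ∧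
          ∀ a b, reductE E (colr E g d) ρ₂ (f a) (f b) = reductE E (colr E g d) ρ₁ a b)
      ↔ stableNum E g ≤ d) := by
  
  classical
  have partA : (d < stableNum E g) → ∃ ρ₁ ρ₂ : V → V,
      IsSubstWith (colr E g d) ρ₁ ∧ IsSubstWith (colr E g d) ρ₂ ∧
      ¬ ∃ f : RNodes ρ₁ ≃ RNodes ρ₂,
          (∀ a, g (f a).val = g a.val) ∧
          ∀ a b, reductE E (colr E g d) ρ₂ (f a) (f b) = reductE E (colr E g d) ρ₁ a b := by
    intro hd
    have hnotst : ¬ stableAt E g d := fun hs => absurd (Nat.sInf_le hs) (Nat.not_le.mpr hd)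
    rw [stableAt] at hnotst
    push_neg at hnotst
    obtain ⟨v, w, hvw⟩ := hnotst
    have hP : colr E g d v = colr E g d w := by
      rcases hvw with ⟨hP, _⟩ | ⟨hPn, hQe⟩
      · exact hP
      · exact absurd (colr_proj hQe) hPn
    have hQ : colr E g (d+1) v ≠ colr E g (d+1) w := by
      rcases hvw with ⟨_, hQ⟩ | ⟨hPn, _⟩
      · exact hQ
      · exact absurd hP hPn
    haveI : Nonempty V := ⟨v⟩
    set ρ₁ : V → V := fun u => if colr E g d u = colr E g d v then v
        else repPick (colr E g d) u with hρ₁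
    set ρ₂ : V → V := fun u => if colr E g d u = colr E g d v then w
        else repPick (colr E g d) u with hρ₂
    have hsub₁ : IsSubstWith (colr E g d) ρ₁ := isSubst_if (colr E g d) v v rfl
    have hsub₂ : IsSubstWith (colr E g d) ρ₂ := isSubst_if (colr E g d) v w hP.symm
    refine ⟨ρ₁, ρ₂, hsub₁, hsub₂, ?_⟩
    rintro ⟨f, hgf, hEf⟩
    have hv1 : ρ₁ v = v := by rw [hρ₁]; exact if_pos rfl
    let a : RNodes ρ₁ := ⟨v, v, hv1⟩
    have h1 : colr (reductE E (colr E g d) ρ₁) (reductG g ρ₁) (d+1) a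
        = colr E g (d+1) a.val :=
      colr_reduct E g d ρ₁ hsub₁ (d+1) le_rfl a
    have h2 : colr (reductE E (colr E g d) ρ₂) (reductG g ρ₂) (d+1) (f a)
        = colr E g (d+1) (f a).val :=
      colr_reduct E g d ρ₂ hsub₂ (d+1) le_rfl (f a)
    have h3 : colr (reductE E (colr E g d) ρ₂) (reductG g ρ₂) (d+1) (f a)
        = colr (reductE E (colr E g d) ρ₁) (reductG g ρ₁) (d+1) a :=
      colr_equiv _ _ _ _ f hgf hEf (d+1) a
    have hkey : colr E g (d+1) (f a).val = colr E g (d+1) v := by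
      have : a.val = v := rfl
      rw [← h2, h3, h1, this]
    obtain ⟨u, hu⟩ := (f a).2
    by_cases hc : colr E g d u = colr E g d v
    · have hw : (f a).val = w := by rw [← hu, hρ₂]; exact if_pos hc
      rw [hw] at hkey
      exact hQ hkey.symm
    · have hval : (f a).val = repPick (colr E g d) u := by
        rw [← hu, hρ₂]; exact if_neg hc
      have hcol1 : colr E g d (f a).val = colr E g d u := by
        rw [hval]; exact repPick_col _ u
      have hdv : colr E g d (f a).val = colr E g d v := colr_proj hkey
      exact hc (hcol1.symm.trans hdv)
  refine ⟨partA, ?_, ?_⟩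
  · intro H
    by_contra hnot
    obtain ⟨ρ₁, ρ₂, h1, h2, h3⟩ := partA (Nat.not_le.mp hnot)
    exact h3 (H ρ₁ ρ₂ h1 h2)
  · intro hle ρ₁ ρ₂ hs₁ hs₂
    have hst : stableAt E g d := stableAt_of_le (stableAt_stableNum E g) hle
    have hρ₁fix : ∀ b : RNodes ρ₁, ρ₁ b.val = b.val := by
      intro b; obtain ⟨u, hu⟩ := b.2; rw [← hu]; exact hs₁.2 _ _ (hs₁.1 u)
    have hρ₂fix : ∀ b : RNodes ρ₂, ρ₂ b.val = b.val := by
      intro b; obtain ⟨u, hu⟩ := b.2; rw [← hu]; exact hs₂.2 _ _ (hs₂.1 u)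
    refine ⟨⟨fun a => ⟨ρ₂ a.val, a.val, rfl⟩, fun b => ⟨ρ₁ b.val, b.val, rfl⟩, ?_, ?_⟩, ?_, ?_⟩
    · intro a
      apply Subtype.ext
      show ρ₁ (ρ₂ a.val) = a.val
      calc ρ₁ (ρ₂ a.val) = ρ₁ a.val := hs₁.2 _ _ (hs₂.1 a.val)
        _ = a.val := hρ₁fix a
    · intro b
      apply Subtype.ext
      show ρ₂ (ρ₁ b.val) = b.val
      calc ρ₂ (ρ₁ b.val) = ρ₂ b.val := hs₂.2 _ _ (hs₁.1 b.val)
        _ = b.val := hρ₂fix b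
    · intro a
      show g (ρ₂ a.val) = g a.val
      exact colr_mono E g (Nat.zero_le d) (hs₂.1 a.val)
    · intro a b
      show (∑ v' ∈ Finset.univ.filter
              (fun v' => colr E g d v' = colr E g d (ρ₂ a.val)), E v' (ρ₂ b.val))
          = ∑ v' ∈ Finset.univ.filter
              (fun v' => colr E g d v' = colr E g d a.val), E v' b.val
      rw [hs₂.1 a.val]
      rw [sum_filter_class E (colr E g d) (colr E g d a.val) (ρ₂ b.val),
          sum_filter_class E (colr E g d) (colr E g d a.val) b.val]
      rw [colr_snd ((hst _ _).mp (hs₂.1 b.val))]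
end

section
/- Let ρ be a d-substitution on G such that for every node v, the representative ρ(v) has minimal d-incidence within its class: incid^d_G(ρ(v)) = min over v' ∈ [v]_d of incid^d_G(v'). Then the size of G/ρ (number of nodes plus number of distinct edges) is minimal among all d-reducts of G. -/
open Classical

lemma subst_fix {V C : Type*} {col : V → C} {σ : V → V} (hσ : IsSubstWith col σ)
    (b : RNodes σ) : σ b.val = b.val := by
  obtain ⟨_, u, rfl⟩ := b
  exact hσ.2 _ _ (hσ.1 u)

lemma reductE_pos_iff {V C : Type*} [Fintype V] (E : V → V → ℕ) (col : V → C)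
    (σ : V → V) (a b : RNodes σ) :
    0 < reductE E col σ a b ↔ col a.val ∈ col '' { u : V | 0 < E u b.val } := by
  unfold reductE
  rw [pos_iff_ne_zero, Ne, Finset.sum_eq_zero_iff]
  push_neg
  constructor
  · rintro ⟨v', hv', hE⟩
    rw [Finset.mem_filter] at hv'
    exact ⟨v', Nat.pos_of_ne_zero hE, hv'.2⟩
  · rintro ⟨u, hu, hcu⟩
    exact ⟨u, Finset.mem_filter.2 ⟨Finset.mem_univ _, hcu⟩, Nat.pos_iff_ne_zero.1 hu⟩

lemma reduct_edge_count {V C : Type*} [Fintype V] (E : V → V → ℕ) (col : V → C)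
    (σ : V → V) (hσ : IsSubstWith col σ) :
    { e : RNodes σ × RNodes σ | 0 < reductE E col σ e.1 e.2 }.ncard
      = ∑ b : RNodes σ, (col '' { u : V | 0 < E u b.val }).ncard := by
  classical
  rw [Set.ncard_eq_toFinset_card', Set.toFinset_setOf]
  rw [Finset.card_eq_sum_card_fiberwise
    (f := fun e : RNodes σ × RNodes σ => e.2) (t := Finset.univ)
    (fun e _ => Finset.mem_univ e.2)]
  refine Finset.sum_congr rfl fun b _ => ?_
  have hT : (col '' { u : V | 0 < E u b.val }).Finite :=
    Set.Finite.image _ (Set.toFinite _)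
  rw [Set.ncard_eq_toFinset_card _ hT]
  refine Finset.card_bij (fun e _ => col e.1.val) ?_ ?_ ?_
  · intro e he
    simp only [Finset.mem_filter, Finset.mem_univ, true_and] at he
    rw [Set.Finite.mem_toFinset]
    have h := (reductE_pos_iff E col σ e.1 e.2).1 he.1
    rwa [he.2] at h
  · intro e he e' he' hcol
    simp only [Finset.mem_filter, Finset.mem_univ, true_and] at he he'
    have h1 : e.1.val = e'.1.val := by
      rw [← subst_fix hσ e.1, ← subst_fix hσ e'.1]
      exact hσ.2 _ _ hcol
    have : e.1 = e'.1 := Subtype.ext h1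
    exact Prod.ext this (he.2.trans he'.2.symm)
  · intro c hc
    rw [Set.Finite.mem_toFinset] at hc
    obtain ⟨u, hu, rfl⟩ := hc
    refine ⟨(⟨σ u, u, rfl⟩, b), ?_, ?_⟩
    · simp only [Finset.mem_filter, Finset.mem_univ, true_and, and_true]
      exact (reductE_pos_iff E col σ _ _).2 ⟨u, hu, (hσ.1 u).symm⟩
    · exact hσ.1 u

/-- a substitution picking representatives of minimal `d`-incidence
yields a `d`-reduct of minimal size (nodes plus distinct edges). -/
theorem reduct_minimal_size {V Y : Type*} [Fintype V] [DecidableEq V]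
    (E : V → V → ℕ) (g : V → Y) (d : ℕ∞) (ρ : V → V)
    (hρ : IsSubstWith (colrE' E g d) ρ)
    (hmin : ∀ v v' : V, colrE' E g d v = colrE' E g d v' →
      ((colrE' E g d) '' { u : V | 0 < E u (ρ v) }).ncard
        ≤ ((colrE' E g d) '' { u : V | 0 < E u v' }).ncard) :
    ∀ μ : V → V, IsSubstWith (colrE' E g d) μ →
      Fintype.card (RNodes ρ)
          + { e : RNodes ρ × RNodes ρ | 0 < reductE E (colrE' E g d) ρ e.1 e.2 }.ncard
        ≤ Fintype.card (RNodes μ)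
          + { e : RNodes μ × RNodes μ | 0 < reductE E (colrE' E g d) μ e.1 e.2 }.ncard := by
  intro μ hμ
  classical
  set col := colrE' E g d with hcol
  let e : RNodes ρ ≃ RNodes μ :=
    { toFun := fun b => ⟨μ b.val, b.val, rfl⟩
      invFun := fun a => ⟨ρ a.val, a.val, rfl⟩
      left_inv := fun b => by
        refine Subtype.ext ?_
        have : ρ (μ b.val) = ρ b.val := hρ.2 _ _ (hμ.1 b.val)
        simp only [this, subst_fix hρ b]
      right_inv := fun a => by
        refine Subtype.ext ?_
        have : μ (ρ a.val) = μ a.val := hμ.2 _ _ (hρ.1 a.val)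
        simp only [this, subst_fix hμ a] }
  have hev : ∀ b : RNodes ρ, (e b).val = μ b.val := fun b => rfl
  have hcard : Fintype.card (RNodes ρ) = Fintype.card (RNodes μ) :=
    Fintype.card_congr e
  rw [reduct_edge_count E col ρ hρ, reduct_edge_count E col μ hμ, hcard]
  refine Nat.add_le_add_left ?_ _
  rw [← Equiv.sum_comp e (fun a : RNodes μ => (col '' { u : V | 0 < E u a.val }).ncard)]
  refine Finset.sum_le_sum fun b _ => ?_
  have h1 : col b.val = col (μ b.val) := (hμ.1 b.val).symm
  have := hmin b.val (μ b.val) h1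
  rw [subst_fix hρ b] at this
  rw [hev b]
  exact this
end

section
/- Let L = (agg, comb) be a GNN layer of width c, i.e., agg(M) = agg(⌊M⌋_c) for every finite multiset M. If one step of c-graded color refinement assigns equal colors to v ∈ G and w ∈ H (colr_c(G)(v) = colr_c(H)(w)), then L(G)(v) = L(H)(w). Consequently, a GNN of at most d layers all of width c satisfies L(G)(v) = L(H)(w) whenever colr_c^d(G)(v) = colr_c^d(H)(w). -/
open Classical

lemma count_capM {α : Type*} [inst : DecidableEq α] (c : ℕ∞) (M : Multiset α) (y : α) :
    Multiset.count y (capM c M) = (min (M.count y : ℕ∞) c).toNat := by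
  have hc : ∀ x, @Multiset.count α (Classical.decEq α) x M = Multiset.count x M := by
    intro x; rw [Subsingleton.elim (Classical.decEq α) inst]
  obtain rfl : inst = Classical.decEq α := Subsingleton.elim _ _
  unfold capM
  rw [Multiset.count_bind]
  simp only [Multiset.count_replicate, hc]
  have : (Multiset.map (fun x => if x = y then ((Multiset.count x M : ℕ∞) ⊓ c).toNat else 0) M.toFinset.val).sum
      = ∑ x ∈ M.toFinset, (if x = y then ((Multiset.count x M : ℕ∞) ⊓ c).toNat else 0) := rfl
  rw [this, Finset.sum_ite_eq' M.toFinset y]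
  by_cases hy : y ∈ M.toFinset
  · simp [hy]
  · simp [hy, Multiset.count_eq_zero.2 (fun h => hy (Multiset.mem_toFinset.2 h))]

lemma min_sum_congr {ι : Type*} (t : Finset ι) (a b : ι → ℕ) (c : ℕ∞)
    (h : ∀ i ∈ t, min (a i : ℕ∞) c = min (b i : ℕ∞) c) :
    min ((∑ i ∈ t, a i : ℕ) : ℕ∞) c = min ((∑ i ∈ t, b i : ℕ) : ℕ∞) c := by
  by_cases hall : ∀ i ∈ t, (a i : ℕ∞) < c
  · have : ∀ i ∈ t, a i = b i := by
      intro i hi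
      have h1 : min (a i : ℕ∞) c = a i := min_eq_left (hall i hi).le
      have h2 : min (b i : ℕ∞) c = (a i : ℕ∞) := (h i hi).symm.trans h1
      rcases min_cases (b i : ℕ∞) c with ⟨he, _⟩ | ⟨he, hle⟩
      · exact_mod_cast (he.symm.trans h2).symm
      · exfalso; rw [he] at h2; exact absurd (h2 ▸ hall i hi) (lt_irrefl _)
    rw [Finset.sum_congr rfl this]
  · push_neg at hall
    obtain ⟨i, hi, hci⟩ := hall
    have hbi : c ≤ (b i : ℕ∞) := by
      have := h i hi
      rw [min_eq_right hci] at this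
      exact min_eq_right_iff.mp this.symm
    have ha : c ≤ ((∑ j ∈ t, a j : ℕ) : ℕ∞) := by
      refine hci.trans ?_
      exact_mod_cast Finset.single_le_sum (f := a) (fun _ _ => Nat.zero_le _) hi
    have hb : c ≤ ((∑ j ∈ t, b j : ℕ) : ℕ∞) := by
      refine hbi.trans ?_
      exact_mod_cast Finset.single_le_sum (f := b) (fun _ _ => Nat.zero_le _) hi
    rw [min_eq_right ha, min_eq_right hb]

lemma min_count_capM {α : Type*} [DecidableEq α] (c : ℕ∞) (M : Multiset α) (x : α) :
    min (((capM c M).count x : ℕ)  : ℕ∞) c = min (M.count x : ℕ∞) c := by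
  rw [count_capM]
  have hne : min (M.count x : ℕ∞) c ≠ ⊤ :=
    ne_top_of_le_ne_top (ENat.coe_ne_top _) (min_le_left _ _)
  rw [ENat.coe_toNat hne, min_assoc, min_self]

lemma count_map_eq_sum {α β : Type*} [DecidableEq α] [DecidableEq β] (f : α → β)
    (A : Multiset α) (y : β) :
    (A.map f).count y = ∑ x ∈ A.toFinset.filter (fun a => y = f a), A.count x := by
  rw [Multiset.count_map]
  rw [← Multiset.toFinset_sum_count_eq]
  rw [Multiset.toFinset_filter]
  refine Finset.sum_congr rfl ?_
  intro x hx
  rw [Multiset.count_filter]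
  simp only [Finset.mem_filter] at hx
  simp [hx.2]

lemma capM_map_capM {α β : Type*} (c : ℕ∞) (f : α → β) (M : Multiset α) :
    capM c ((capM c M).map f) = capM c (M.map f) := by
  classical
  ext y
  rw [count_capM, count_capM]
  congr 1
  rcases eq_or_ne c 0 with rfl | hc
  · simp
  · have htf : (capM c M).toFinset = M.toFinset := by
      ext x
      simp only [Multiset.mem_toFinset, ← Multiset.count_pos]
      constructor
      · intro h
        by_contra h0
        have hm0 : M.count x = 0 := by omega
        have hmc := min_count_capM c M x
        rw [hm0] at hmc
        simp only [Nat.cast_zero] at hmc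
        rw [min_eq_left (zero_le : (0 : ℕ∞) ≤ c)] at hmc
        rcases min_eq_iff.mp hmc with ⟨h1, _⟩ | ⟨h1, _⟩
        · have : (capM c M).count x = 0 := by exact_mod_cast h1
          omega
        · exact hc h1
      · intro h
        by_contra h0
        have hcap0 : (capM c M).count x = 0 := by omega
        have hmc := min_count_capM c M x
        rw [hcap0] at hmc
        simp only [Nat.cast_zero] at hmc
        rw [min_eq_left (zero_le : (0 : ℕ∞) ≤ c)] at hmc
        rcases min_eq_iff.mp hmc.symm with ⟨h1, _⟩ | ⟨h1, _⟩
        · have : M.count x = 0 := by exact_mod_cast h1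
          omega
        · exact hc h1
    rw [count_map_eq_sum, count_map_eq_sum, htf]
    exact min_sum_congr _ _ _ c (fun x hx => min_count_capM c M x)

noncomputable def Fmap {p q : ℕ} (L : GNNLayer p q) (c : ℕ∞) :
    (d : ℕ) → CRt (Fin p → ℝ) (d+1) → CRt (Fin q → ℝ) d
  | 0, xM => L.comb xM.1 (L.agg xM.2)
  | (d+1), xM => (Fmap L c d xM.1, capM c (xM.2.map (Fmap L c d)))

lemma colrC_succ {V : Type*} [Fintype V] {Y : Type*} (c : ℕ∞) (E : V → V → ℕ)
    (g : V → Y) (d : ℕ) (v : V) :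
    colrC c E g (d+1) v = (colrC c E g d v, capM c ((inc E v).map (colrC c E g d))) := rfl

lemma colrC_layer {V : Type*} [Fintype V] {p q : ℕ} (L : GNNLayer p q)
    (hW : L.HasWidth c) (E : V → V → ℕ) (g : V → Fin p → ℝ) :
    ∀ (d : ℕ) (v : V), colrC c E (L.apply E g) d v = Fmap L c d (colrC c E g (d+1) v)
  | 0, v => by
    show L.apply E g v = L.comb (g v) (L.agg (capM c ((inc E v).map g)))
    rw [← hW]
    rfl
  | (d+1), v => by
    rw [colrC_succ, colrC_succ]
    refine Prod.ext (colrC_layer L hW E g d v) ?_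
    show capM c ((inc E v).map (colrC c E (L.apply E g) d))
        = capM c ((capM c ((inc E v).map (colrC c E g (d+1)))).map (Fmap L c d))
    rw [capM_map_capM, Multiset.map_map]
    congr 1
    apply Multiset.map_congr rfl
    intro w _
    exact colrC_layer L hW E g d w

lemma colrC_down {V W : Type*} [Fintype V] [Fintype W] {p : ℕ} (c : ℕ∞)
    (EG : V → V → ℕ) (g : V → Fin p → ℝ) (EH : W → W → ℕ) (h : W → Fin p → ℝ)
    (v : V) (w : W) {e d : ℕ} (hle : e ≤ d)
    (heq : colrC c EG g d v = colrC c EH h d w) :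
    colrC c EG g e v = colrC c EH h e w := by
  obtain ⟨k, rfl⟩ := Nat.exists_eq_add_of_le hle
  induction k with
  | zero => exact heq
  | succ k ih =>
    apply ih
    · omega
    · have := congrArg Prod.fst heq
      rw [show e + (k+1) = (e+k) + 1 by omega] at heq
      rw [colrC_succ, colrC_succ] at heq
      exact congrArg Prod.fst heq

lemma layer_case {V W : Type*} [Fintype V] [Fintype W] {p q : ℕ} (c : ℕ∞)
    (EG : V → V → ℕ) (g : V → Fin p → ℝ) (EH : W → W → ℕ) (h : W → Fin p → ℝ)
    (v : V) (w : W) (L : GNNLayer p q) (hW : L.HasWidth c)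
    (heq : colrC c EG g 1 v = colrC c EH h 1 w) :
    L.apply EG g v = L.apply EH h w := by
  rw [colrC_succ, colrC_succ] at heq
  have h1 : g v = h w := congrArg Prod.fst heq
  have h2 : capM c ((inc EG v).map g) = capM c ((inc EH w).map h) := congrArg Prod.snd heq
  show L.comb (g v) (L.agg ((inc EG v).map g)) = L.comb (h w) (L.agg ((inc EH w).map h))
  rw [h1, hW ((inc EG v).map g), hW ((inc EH w).map h), h2]

lemma gnn_case {q : ℕ} (c : ℕ∞) :
    ∀ {p : ℕ} (L : GNN p q), L.HasWidth c →
    ∀ {V W : Type*} [Fintype V] [Fintype W] (EG : V → V → ℕ) (g : V → Fin p → ℝ)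
      (EH : W → W → ℕ) (h : W → Fin p → ℝ) (v : V) (w : W) (d : ℕ),
      L.depth ≤ d → colrC c EG g d v = colrC c EH h d w →
      L.apply EG g v = L.apply EH h w := by
  intro p L
  induction L with
  | single L =>
    intro hW V W _ _ EG g EH h v w d hd heq
    have h1 : (1 : ℕ) ≤ d := hd
    exact layer_case c EG g EH h v w L hW (colrC_down c EG g EH h v w h1 heq)
  | cons L rest ih =>
    intro hW V W _ _ EG g EH h v w d hd heq
    have hd' : rest.depth + 1 ≤ d := hd
    have heq' := colrC_down c EG g EH h v w hd' heq
    have step : colrC c EG (L.apply EG g) rest.depth v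
        = colrC c EH (L.apply EH h) rest.depth w := by
      rw [colrC_layer L hW.1 EG g, colrC_layer L hW.1 EH h, heq']
    exact ih hW.2 EG (L.apply EG g) EH (L.apply EH h) v w rest.depth le_rfl step

/-- a width-`c` layer cannot distinguish nodes with equal one-step
`c`-graded refinement colors; consequently a GNN of at most `d` layers, all of
width `c`, cannot distinguish nodes with equal `colr_c^d` colors. -/
theorem width_layer_and_gnn_of_gradedColr_eq {V W : Type*} [Fintype V] [Fintype W]
    {p q : ℕ} (c : ℕ∞) (EG : V → V → ℕ) (g : V → Fin p → ℝ)
    (EH : W → W → ℕ) (h : W → Fin p → ℝ) (v : V) (w : W) :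
    (∀ L : GNNLayer p q, L.HasWidth c → colrC c EG g 1 v = colrC c EH h 1 w →
      L.apply EG g v = L.apply EH h w) ∧
    (∀ (d : ℕ) (L : GNN p q), L.HasWidth c → L.depth ≤ d →
      colrC c EG g d v = colrC c EH h d w → L.apply EG g v = L.apply EH h w) := by
  constructor
  · intro L hW heq
    exact layer_case c EG g EH h v w L hW heq
  · intro d L hW hd heq
    exact gnn_case c L hW EG g EH h v w d hd heq
end
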